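/- Let F be an algebraically closed field, and let α̃ : α̃_1 | ⋯ | α̃_n and γ̃ : γ̃_1 | ⋯ | γ̃_{n+m+p} be divisibility chains of nonzero homogeneous polynomials in F[λ,μ] with γ̃_i | α̃_i | γ̃_{i+m+p} for i = 1,…,n. Let ψ_1,…,ψ_k be the distinct irreducible homogeneous factors of γ̃_{n+m+p} (each of degree 1, since F is algebraically closed), and write α̃_i = ψ_1^{a^1_{n+1−i}} ⋯ ψ_k^{a^k_{n+1−i}} for i = 1,…,n and γ̃_i = ψ_1^{g^1_{n+m+p+1−i}} ⋯ ψ_k^{g^k_{n+m+p+1−i}} for i = 1,…,n+m+p, so that a^i = (a^i_1,…,a^i_n) and g^i = (g^i_1,…,g^i_{n+m+p}) are partitions for each i = 1,…,k. Then the sequence of degrees (d(σ̃_{m+p}(α̃,γ̃)), …, d(σ̃_1(α̃,γ̃))) equals the componentwise sum of partitions conj(conj(g^1) − conj(a^1)) + ⋯ + conj(conj(g^k) − conj(a^k)), where conj denotes the dual (conjugate) partition. -/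

import Mathlib

noncomputable section

/-- The polynomial ring `F[λ,μ]`. -/
abbrev Poly2 (F : Type*) [Field F] := MvPolynomial (Fin 2) F

/-- `F[λ,μ]` is a UFD, hence carries a (noncomputable) GCD/LCM structure,
well defined up to scalars; degrees of lcm's are independent of this choice. -/
noncomputable instance (F : Type*) [Field F] : GCDMonoid (Poly2 F) :=
  UniqueFactorizationMonoid.toGCDMonoid _

/-- Extension of a finite chain `δ̃_1 | ⋯ | δ̃_x` (0-indexed as `δ 0, …, δ (x-1)`)
to all integer indices, with the convention `δ̃_i = 1` for out-of-range `i`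
(in particular for `i ≤ 0`). -/
def ext {F : Type*} [Field F] {x : ℕ} (δ : Fin x → Poly2 F) (j : ℤ) : Poly2 F :=
  if h : 1 ≤ j ∧ j ≤ x then δ ⟨(j - 1).toNat, by omega⟩ else 1

/-- `d(π̃_i(δ̃,ε̃)) = ∑_{j=1}^{x+i} d(lcm(δ̃_{j−i}, ε̃_j))`, the total degree of
`π̃_i(δ̃,ε̃) = ∏_{j=1}^{x+i} lcm(δ̃_{j−i}, ε̃_j)`. -/
def piDeg {F : Type*} [Field F] {x z : ℕ} (δ : Fin x → Poly2 F) (ε : Fin z → Poly2 F)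
    (i : ℕ) : ℕ :=
  ∑ j ∈ Finset.Icc 1 (x + i),
    (lcm (ext δ ((j : ℤ) - (i : ℤ))) (ext ε (j : ℤ))).totalDegree

/-- The `i`-th entry (1-indexed: `i ≥ 1`, passed here as `i - 1 : ℕ`) of the dual
(conjugate) partition of the partition given by the tuple `f`:
`conj f i = #{j : f_j ≥ i + 1}` counts (0-indexed `i`) the entries of `f` that are `≥ i+1`. -/
def conjP {N : ℕ} (f : Fin N → ℕ) (i : ℕ) : ℕ :=
  (Finset.univ.filter (fun j => i + 1 ≤ f j)).card

open MvPolynomial in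
lemma coeff_grading {σ R : Type*} [CommRing R] (p : MvPolynomial σ R) (d : ℕ) :
    ((MvPolynomial.eval₂Hom (Polynomial.C.comp MvPolynomial.C)
      (fun i : σ => Polynomial.C (MvPolynomial.X i) * Polynomial.X)) p).coeff d
      = MvPolynomial.homogeneousComponent d p := by
  induction p using MvPolynomial.induction_on' with
  | add p q hp hq => simp only [map_add, Polynomial.coeff_add, hp, hq]
  | monomial s c =>
    rw [MvPolynomial.eval₂Hom_monomial]
    have h1 : (s.prod fun i e => (Polynomial.C (MvPolynomial.X (R := R) i) * Polynomial.X) ^ e)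
        = Polynomial.C (s.prod fun i e => (MvPolynomial.X i) ^ e) * Polynomial.X ^ s.degree := by
      rw [Finsupp.prod]
      simp only [mul_pow]
      rw [Finset.prod_mul_distrib, Finset.prod_pow_eq_pow_sum]
      simp only [← map_pow, ← map_prod]
      rw [Finsupp.prod, Finsupp.degree]; rfl
    rw [h1]
    have h2 : MvPolynomial.homogeneousComponent d ((MvPolynomial.monomial s) c)
        = if d = s.degree then (MvPolynomial.monomial s) c else 0 :=
      MvPolynomial.homogeneousComponent_of_mem (MvPolynomial.isHomogeneous_monomial c rfl)
    rw [h2]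
    simp only [RingHom.coe_comp, Function.comp_apply, ← mul_assoc, ← map_mul,
      Polynomial.coeff_C_mul, Polynomial.coeff_X_pow]
    rw [MvPolynomial.monomial_eq]
    by_cases hd : d = s.degree <;> simp [hd, eq_comm]

lemma totalDegree_eq_zero_of_isUnit {σ R : Type*} [CommRing R] [IsDomain R]
    {u : MvPolynomial σ R} (h : IsUnit u) : u.totalDegree = 0 := by
  classical
  have hu0 : u ≠ 0 := h.ne_zero
  set E : MvPolynomial σ R →+* Polynomial (MvPolynomial σ R) :=
    (MvPolynomial.eval₂Hom (Polynomial.C.comp MvPolynomial.C)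
      (fun i : σ => Polynomial.C (MvPolynomial.X i) * Polynomial.X)) with hE
  have hunit : IsUnit (E u) := h.map E
  have h0 : (E u).natDegree = 0 := Polynomial.natDegree_eq_zero_of_isUnit hunit
  have hcomp : MvPolynomial.homogeneousComponent u.totalDegree u ≠ 0 := by
    obtain ⟨m, hm, hms⟩ := Finset.exists_mem_eq_sup u.support
      (MvPolynomial.support_nonempty.mpr hu0) (fun m => m.sum fun _ e => e)
    intro hcz
    have := congrArg (MvPolynomial.coeff m) hcz
    rw [MvPolynomial.coeff_homogeneousComponent] at this
    have hdeg : m.degree = u.totalDegree := by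
      rw [MvPolynomial.totalDegree, hms, Finsupp.degree, Finsupp.sum]; rfl
    rw [if_pos hdeg] at this
    exact (MvPolynomial.mem_support_iff.mp hm) (by simpa using this)
  have hle : u.totalDegree ≤ (E u).natDegree :=
    Polynomial.le_natDegree_of_ne_zero (by rw [hE, coeff_grading]; exact hcomp)
  omega

lemma totalDegree_eq_of_associated {σ R : Type*} [CommRing R] [IsDomain R]
    {x y : MvPolynomial σ R} (h : Associated x y) : x.totalDegree = y.totalDegree := by
  obtain ⟨u, rfl⟩ := h
  have hu : (↑u : MvPolynomial σ R).totalDegree = 0 := totalDegree_eq_zero_of_isUnit u.isUnit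
  have hui : (↑u⁻¹ : MvPolynomial σ R).totalDegree = 0 := totalDegree_eq_zero_of_isUnit u⁻¹.isUnit
  apply le_antisymm
  · have : x = x * u * u⁻¹ := by rw [mul_assoc, ← Units.val_mul, mul_inv_cancel, Units.val_one, mul_one]
    calc x.totalDegree = (x * u * ↑u⁻¹).totalDegree := by rw [← this]
      _ ≤ (x * u).totalDegree + (↑u⁻¹ : MvPolynomial σ R).totalDegree :=
        MvPolynomial.totalDegree_mul _ _
      _ = (x * u).totalDegree := by rw [hui, add_zero]
  · calc (x * u).totalDegree ≤ x.totalDegree + (↑u : MvPolynomial σ R).totalDegree :=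
        MvPolynomial.totalDegree_mul _ _
      _ = x.totalDegree := by rw [hu, add_zero]

lemma prod_pow_primes_dvd {M : Type*} [CommMonoidWithZero M] [IsCancelMulZero M] {k : ℕ} (ψ : Fin k → M)
    (hp : ∀ l, Prime (ψ l)) (hd : ∀ l l', l ≠ l' → ¬ Associated (ψ l) (ψ l')) (c : Fin k → ℕ)
    (s : Finset (Fin k)) :
    ∀ (z : M), (∀ l ∈ s, ψ l ^ c l ∣ z) → (∏ l ∈ s, ψ l ^ c l) ∣ z := by
  classical
  induction s using Finset.induction_on with
  | empty => simp
  | insert t s' hx ih =>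
    intro z hz
    obtain ⟨w, rfl⟩ := hz t (Finset.mem_insert_self _ _)
    rw [Finset.prod_insert hx]
    apply mul_dvd_mul_left
    apply ih
    intro l hl
    have hne : l ≠ t := fun h => hx (h ▸ hl)
    refine (hp l).pow_dvd_of_dvd_mul_left _ ?_ (hz l (Finset.mem_insert_of_mem hl))
    intro hdvd'
    exact hd l t hne ((hp l).associated_of_dvd (hp t) ((hp l).dvd_of_dvd_pow hdvd'))


lemma lcm_pow_totalDegree {F : Type*} [Field F] {k : ℕ} (ψ : Fin k → Poly2 F)
    (hirr : ∀ l, Irreducible (ψ l))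
    (hhom : ∀ l, (ψ l).IsHomogeneous 1)
    (hdistinct : ∀ l l', l ≠ l' → ¬ Associated (ψ l) (ψ l'))
    (e f : Fin k → ℕ) :
    (lcm (∏ l, ψ l ^ e l) (∏ l, ψ l ^ f l)).totalDegree = ∑ l, max (e l) (f l) := by
  classical
  have hprime : ∀ l, Prime (ψ l) := fun l =>
    UniqueFactorizationMonoid.irreducible_iff_prime.mp (hirr l)
  have hPne : ∀ c : Fin k → ℕ, (∏ l, ψ l ^ c l) ≠ 0 := by
    intro c
    rw [Finset.prod_ne_zero_iff]
    exact fun l _ => pow_ne_zero _ (hprime l).ne_zero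
  have hPhom : ∀ c : Fin k → ℕ, (∏ l, ψ l ^ c l).IsHomogeneous (∑ l, c l) :=
    fun c => MvPolynomial.IsHomogeneous.prod Finset.univ (fun l => ψ l ^ c l) c
      (fun l _ => by simpa using (hhom l).pow (c l))
  have hPdvd : ∀ c c' : Fin k → ℕ, (∀ l, c l ≤ c' l) →
      (∏ l, ψ l ^ c l) ∣ (∏ l, ψ l ^ c' l) :=
    fun c c' h => Finset.prod_dvd_prod_of_dvd _ _ (fun l _ => pow_dvd_pow _ (h l))
  have h1 : lcm (∏ l, ψ l ^ e l) (∏ l, ψ l ^ f l) ∣ ∏ l, ψ l ^ max (e l) (f l) :=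
    lcm_dvd (hPdvd e (fun l => max (e l) (f l)) fun l => le_max_left _ _)
      (hPdvd f (fun l => max (e l) (f l)) fun l => le_max_right _ _)
  have h2 : (∏ l, ψ l ^ max (e l) (f l)) ∣ lcm (∏ l, ψ l ^ e l) (∏ l, ψ l ^ f l) := by
    apply prod_pow_primes_dvd ψ hprime hdistinct (fun l => max (e l) (f l)) Finset.univ
    intro l _
    have hel : ψ l ^ e l ∣ lcm (∏ l, ψ l ^ e l) (∏ l, ψ l ^ f l) :=
      dvd_trans (Finset.dvd_prod_of_mem (fun l => ψ l ^ e l) (Finset.mem_univ l))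
        (dvd_lcm_left _ _)
    have hfl : ψ l ^ f l ∣ lcm (∏ l, ψ l ^ e l) (∏ l, ψ l ^ f l) :=
      dvd_trans (Finset.dvd_prod_of_mem (fun l => ψ l ^ f l) (Finset.mem_univ l))
        (dvd_lcm_right _ _)
    rcases max_cases (e l) (f l) with ⟨hm, _⟩ | ⟨hm, _⟩
    · rw [hm]; exact hel
    · rw [hm]; exact hfl
  have hassoc : Associated (lcm (∏ l, ψ l ^ e l) (∏ l, ψ l ^ f l))
      (∏ l, ψ l ^ max (e l) (f l)) := associated_of_dvd_dvd h1 h2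
  rw [totalDegree_eq_of_associated hassoc]
  exact (hPhom (fun l => max (e l) (f l))).totalDegree (hPne _)


/-- The exponent of `ψ l` in `ext δ (j - i)`. -/
def Aexp (x : ℕ) (f : Fin x → ℕ) (i j : ℕ) : ℕ :=
  if h : i + 1 ≤ j ∧ j ≤ x + i then f ⟨x + i - j, by omega⟩ else 0

lemma Aexp_le {x : ℕ} (f : Fin x → ℕ) (i j : ℕ) : Aexp x f i j ≤ ∑ s, f s := by
  rw [Aexp]
  split
  · exact Finset.single_le_sum (fun s _ => Nat.zero_le _) (Finset.mem_univ _)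
  · exact Nat.zero_le _

lemma conjP_le {N : ℕ} (f : Fin N → ℕ) (c : ℕ) : conjP f c ≤ N := by
  rw [conjP]
  exact le_trans (Finset.card_filter_le _ _) (by simp)

lemma conjP_eq_zero {N : ℕ} (f : Fin N → ℕ) {c : ℕ} (h : ∀ s, f s ≤ c) : conjP f c = 0 := by
  rw [conjP, Finset.card_eq_zero, Finset.filter_eq_empty_iff]
  intro s _
  have := h s
  omega

lemma ext_eq_prod {F : Type*} [Field F] {x k : ℕ} (ψ : Fin k → Poly2 F)
    (δ : Fin x → Poly2 F) (e : Fin k → Fin x → ℕ)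
    (hfac : ∀ t : Fin x, δ t = ∏ l, ψ l ^ e l t.rev) (i j : ℕ) :
    ext δ ((j : ℤ) - (i : ℤ)) = ∏ l, ψ l ^ Aexp x (e l) i j := by
  rw [ext]
  by_cases h : i + 1 ≤ j ∧ j ≤ x + i
  · have h1 : 1 ≤ (j : ℤ) - (i : ℤ) ∧ (j : ℤ) - (i : ℤ) ≤ (x : ℕ) := by omega
    rw [dif_pos h1, hfac]
    apply Finset.prod_congr rfl
    intro l _
    congr 1
    rw [Aexp, dif_pos h]
    congr 1
    apply Fin.ext
    rw [Fin.val_rev]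
    show x - ((((j : ℤ) - (i : ℤ) - 1).toNat) + 1) = x + i - j
    omega
  · have h1 : ¬ (1 ≤ (j : ℤ) - (i : ℤ) ∧ (j : ℤ) - (i : ℤ) ≤ (x : ℕ)) := by omega
    rw [dif_neg h1]
    have : ∀ l : Fin k, Aexp x (e l) i j = 0 := by
      intro l; rw [Aexp, dif_neg h]
    simp [this]

lemma antitone_lt_conjP {N : ℕ} {f : Fin N → ℕ} (hf : Antitone f) (c : ℕ) (s : Fin N) :
    c + 1 ≤ f s ↔ (s : ℕ) < conjP f c := by
  constructor
  · intro h
    have hsub : Finset.Iic s ⊆ Finset.univ.filter (fun j => c + 1 ≤ f j) := by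
      intro t ht
      simp only [Finset.mem_Iic] at ht
      exact Finset.mem_filter.mpr ⟨Finset.mem_univ t, le_trans h (hf ht)⟩
    have hc := Finset.card_le_card hsub
    rw [Fin.card_Iic] at hc
    rw [conjP]
    omega
  · intro h
    by_contra h'
    push_neg at h'
    have hsub : Finset.univ.filter (fun j => c + 1 ≤ f j) ⊆ Finset.Iio s := by
      intro t ht
      rw [Finset.mem_filter] at ht
      rw [Finset.mem_Iio]
      by_contra hts
      push_neg at hts
      exact absurd (le_trans ht.2 (hf hts)) (by omega)
    have hc := Finset.card_le_card hsub
    rw [Fin.card_Iio] at hc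
    rw [conjP] at h
    omega

lemma Aexp_ge_iff {x : ℕ} {f : Fin x → ℕ} (hf : Antitone f) (i j c : ℕ)
    (hj1 : 1 ≤ j) (hj2 : j ≤ x + i) :
    (c + 1 ≤ Aexp x f i j) ↔ x + i - conjP f c < j := by
  have hcle : conjP f c ≤ x := conjP_le f c
  rw [Aexp]
  by_cases h : i + 1 ≤ j ∧ j ≤ x + i
  · rw [dif_pos h]
    refine Iff.trans (antitone_lt_conjP hf c _) ?_
    show x + i - j < conjP f c ↔ x + i - conjP f c < j
    omega
  · rw [dif_neg h]
    omega

lemma max_eq_card_filter (u v C : ℕ) (hu : u ≤ C) (hv : v ≤ C) :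
    max u v = ((Finset.range C).filter (fun c => c + 1 ≤ u ∨ c + 1 ≤ v)).card := by
  have h : (Finset.range C).filter (fun c => c + 1 ≤ u ∨ c + 1 ≤ v) = Finset.range (max u v) := by
    ext c
    simp only [Finset.mem_filter, Finset.mem_range]
    omega
  rw [h, Finset.card_range]

lemma card_Icc_filter_lt (M B : ℕ) :
    ((Finset.Icc 1 B).filter (fun j => M < j)).card = B - M := by
  have h : (Finset.Icc 1 B).filter (fun j => M < j) = Finset.Icc (M + 1) B := by
    ext j
    simp only [Finset.mem_filter, Finset.mem_Icc]
    omega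
  rw [h, Nat.card_Icc]
  omega

lemma sum_max_Aexp {n y N : ℕ} (hN : N = n + y) (fα : Fin n → ℕ) (fγ : Fin N → ℕ)
    (hfα : Antitone fα) (hfγ : Antitone fγ) (i : ℕ) (hi : i ≤ y) (C : ℕ)
    (hCα : ∀ s, fα s ≤ C) (hCγ : ∀ s, fγ s ≤ C) :
    ∑ j ∈ Finset.Icc 1 (n + i), max (Aexp n fα i j) (Aexp N fγ 0 j)
      = ∑ c ∈ Finset.range C, max (conjP fα c) (conjP fγ c - (y - i)) := by
  classical
  have hCα' : ∀ i j, Aexp n fα i j ≤ C := by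
    intro i j
    rw [Aexp]; split
    · exact hCα _
    · exact Nat.zero_le _
  have hCγ' : ∀ i j, Aexp N fγ i j ≤ C := by
    intro i j
    rw [Aexp]; split
    · exact hCγ _
    · exact Nat.zero_le _
  have step : ∀ j ∈ Finset.Icc 1 (n + i),
      max (Aexp n fα i j) (Aexp N fγ 0 j)
        = ((Finset.range C).filter
            (fun c => c + 1 ≤ Aexp n fα i j ∨ c + 1 ≤ Aexp N fγ 0 j)).card :=
    fun j _ => max_eq_card_filter _ _ C (hCα' i j) (hCγ' 0 j)
  rw [Finset.sum_congr rfl step]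
  simp only [Finset.card_filter]
  rw [Finset.sum_comm]
  apply Finset.sum_congr rfl
  intro c _
  rw [← Finset.card_filter]
  have hα := conjP_le fα c
  have hγ := conjP_le fγ c
  have hfilter : (Finset.Icc 1 (n + i)).filter
        (fun j => c + 1 ≤ Aexp n fα i j ∨ c + 1 ≤ Aexp N fγ 0 j)
      = (Finset.Icc 1 (n + i)).filter
        (fun j => min (n + i - conjP fα c) (N - conjP fγ c) < j) := by
    apply Finset.filter_congr
    intro j hj
    rw [Finset.mem_Icc] at hj
    rw [Aexp_ge_iff hfα i j c hj.1 hj.2, Aexp_ge_iff hfγ 0 j c hj.1 (by omega)]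
    omega
  rw [hfilter, card_Icc_filter_lt]
  omega


theorem stmt3 (F : Type*) [Field F] [IsAlgClosed F] (n m p k : ℕ)
    (ψ : Fin k → Poly2 F)
    (hirr : ∀ l, Irreducible (ψ l))
    (hhom : ∀ l, (ψ l).IsHomogeneous 1)
    (hdistinct : ∀ l l', l ≠ l' → ¬ Associated (ψ l) (ψ l'))
    (a : Fin k → Fin n → ℕ) (g : Fin k → Fin (n + m + p) → ℕ)
    (ha : ∀ l, Antitone (a l)) (hg : ∀ l, Antitone (g l))
    (α : Fin n → Poly2 F) (γ : Fin (n + m + p) → Poly2 F)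
    -- `α̃_i = ψ_1^{a^1_{n+1−i}} ⋯ ψ_k^{a^k_{n+1−i}}` (0-indexed via `Fin.rev`)
    (hαfac : ∀ i : Fin n, α i = ∏ l, ψ l ^ a l i.rev)
    -- `γ̃_i = ψ_1^{g^1_{n+m+p+1−i}} ⋯ ψ_k^{g^k_{n+m+p+1−i}}` (0-indexed via `Fin.rev`)
    (hγfac : ∀ i : Fin (n + m + p), γ i = ∏ l, ψ l ^ g l i.rev)
    -- the `ψ_l` are (all the) irreducible factors of `γ̃_{n+m+p}`
    (hpos : 0 < n + m + p)
    (hfactors : ∀ l, ψ l ∣ γ ⟨n + m + p - 1, by omega⟩)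
    (hchain : ∀ i : Fin n,
      γ (Fin.castLE (by omega) i) ∣ α i ∧ α i ∣ γ ⟨i + m + p, by have := i.isLt; omega⟩) :
    -- the sequence `(d(σ̃_{m+p}(α̃,γ̃)), …, d(σ̃_1(α̃,γ̃)))`, whose entry at (0-indexed)
    -- position `q` is `d(σ̃_{m+p−q}) = d(π̃_{m+p−q}) − d(π̃_{m+p−q−1})`, equals the
    -- componentwise sum `conj(conj g^1 − conj a^1) + ⋯ + conj(conj g^k − conj a^k)`
    ∀ q : Fin (m + p),
      piDeg α γ (m + p - q) - piDeg α γ (m + p - q - 1)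
        = ∑ l, {j : ℕ | (q : ℕ) + 1 ≤ conjP (g l) j - conjP (a l) j}.ncard := by
  classical
  intro q
  have hq : (q : ℕ) < m + p := q.isLt
  set Cb : Fin k → ℕ := fun l => (∑ s, a l s) + (∑ s, g l s) + 1 with hCb
  have hCa : ∀ l s, a l s ≤ Cb l := by
    intro l s
    have h1 := Finset.single_le_sum (f := a l) (fun s _ => Nat.zero_le _) (Finset.mem_univ s)
    simp only [hCb]
    omega
  have hCg : ∀ l s, g l s ≤ Cb l := by
    intro l s
    have h1 := Finset.single_le_sum (f := g l) (fun s _ => Nat.zero_le _) (Finset.mem_univ s)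
    simp only [hCb]
    omega
  have key : ∀ i : ℕ, i ≤ m + p → piDeg α γ i
      = ∑ l, ∑ c ∈ Finset.range (Cb l),
          max (conjP (a l) c) (conjP (g l) c - (m + p - i)) := by
    intro i hi
    rw [piDeg]
    have step1 : ∀ j ∈ Finset.Icc 1 (n + i),
        (lcm (ext α ((j : ℤ) - (i : ℤ))) (ext γ (j : ℤ))).totalDegree
          = ∑ l, max (Aexp n (a l) i j) (Aexp (n + m + p) (g l) 0 j) := by
      intro j _
      have e1 : ext α ((j : ℤ) - (i : ℤ)) = ∏ l, ψ l ^ Aexp n (a l) i j :=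
        ext_eq_prod ψ α a hαfac i j
      have e2 : ext γ ((j : ℤ)) = ∏ l, ψ l ^ Aexp (n + m + p) (g l) 0 j := by
        have h0 := ext_eq_prod ψ γ g hγfac 0 j
        simpa using h0
      rw [e1, e2]
      exact lcm_pow_totalDegree ψ hirr hhom hdistinct _ _
    rw [Finset.sum_congr rfl step1, Finset.sum_comm]
    apply Finset.sum_congr rfl
    intro l _
    exact sum_max_Aexp (y := m + p) (by omega) (a l) (g l) (ha l) (hg l) i hi (Cb l)
      (hCa l) (hCg l)
  have hterm : ∀ l (c : ℕ),
      max (conjP (a l) c) (conjP (g l) c - (m + p - (m + p - (q : ℕ) - 1)))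
        ≤ max (conjP (a l) c) (conjP (g l) c - (m + p - (m + p - (q : ℕ)))) := by
    intro l c
    omega
  rw [key (m + p - (q : ℕ)) (by omega), key (m + p - (q : ℕ) - 1) (by omega)]
  rw [← Finset.sum_tsub_distrib _
    (fun l _ => Finset.sum_le_sum (fun c _ => hterm l c))]
  apply Finset.sum_congr rfl
  intro l _
  rw [← Finset.sum_tsub_distrib _ (fun c _ => hterm l c)]
  have hq1 : m + p - (m + p - (q : ℕ)) = (q : ℕ) := by omega
  have hq2 : m + p - (m + p - (q : ℕ) - 1) = (q : ℕ) + 1 := by omega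
  have hstep : ∀ c ∈ Finset.range (Cb l),
      max (conjP (a l) c) (conjP (g l) c - (m + p - (m + p - (q : ℕ))))
        - max (conjP (a l) c) (conjP (g l) c - (m + p - (m + p - (q : ℕ) - 1)))
      = if (q : ℕ) + 1 ≤ conjP (g l) c - conjP (a l) c then 1 else 0 := by
    intro c _
    rw [hq1, hq2]
    split_ifs with h <;> omega
  rw [Finset.sum_congr rfl hstep, ← Finset.card_filter]
  have hset : {j : ℕ | (q : ℕ) + 1 ≤ conjP (g l) j - conjP (a l) j}
      = ↑((Finset.range (Cb l)).filter
          (fun c => (q : ℕ) + 1 ≤ conjP (g l) c - conjP (a l) c)) := by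
    ext j
    simp only [Set.mem_setOf_eq, Finset.coe_filter, Finset.mem_range]
    constructor
    · intro hj
      refine ⟨?_, hj⟩
      by_contra hbig
      push_neg at hbig
      have h0 : conjP (g l) j = 0 := conjP_eq_zero _ (fun s => by have := hCg l s; omega)
      omega
    · exact fun h => h.2
  rw [hset, Set.ncard_coe_finset]

end
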